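/- There exist a constant c > 0 and an infinite family of strings (T_m)_{m≥1}, with lengths n_m = |T_m| tending to infinity, such that z^{⌈c·log n_m⌉}(T_m) = o(ĝ_rl(T_m)); that is, the ratio z^{⌈c·log n_m⌉}(T_m) / ĝ_rl(T_m) tends to 0 as m tends to infinity. -/

import Mathlib

variable {α : Type*}

/-- The substring `T[i..i+ℓ)` (0-indexed). -/
def sub (T : List α) (i ℓ : ℕ) : List α := (T.drop i).take ℓ

/-- `p` is a period of `w`: `0 < p ≤ |w|` and `w[i] = w[i+p]` whenever both sides exist. -/
def IsPeriod (w : List α) (p : ℕ) : Prop :=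
  0 < p ∧ p ≤ w.length ∧ ∀ i, i + p < w.length → w[i]? = w[i + p]?

/-- The minimum period of `w`. -/
noncomputable def minPeriod (w : List α) : ℕ := sInf {p | IsPeriod w p}

/-- Starting position (0-indexed) of the `j`-th phrase (0-indexed) of a parsing,
the parsing being given as a list of (length, source) pairs. -/
def startOf (P : List (ℕ × ℕ)) (j : ℕ) : ℕ := ((P.take j).map Prod.fst).sum

/-- Length of the `j`-th phrase. -/
def lenOf (P : List (ℕ × ℕ)) (j : ℕ) : ℕ := (P[j]?.map Prod.fst).getD 0

/-- Source of the `j`-th phrase. -/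
def srcOf (P : List (ℕ × ℕ)) (j : ℕ) : ℕ := (P[j]?.map Prod.snd).getD 0

/-- `P` is an LZ-like encoding of `T`: phrases have positive length, cover `T`,
and every phrase of length at least 2 has a source strictly before its start with a
matching (possibly overlapping) previous occurrence. (Length-1 phrases are literal
symbols; the symbol is determined by `T`, so it need not be stored.) -/
def IsLZ (T : List α) (P : List (ℕ × ℕ)) : Prop :=
  (∀ q ∈ P, 1 ≤ q.1) ∧ (P.map Prod.fst).sum = T.length ∧
  ∀ j < P.length, 2 ≤ lenOf P j →
    srcOf P j < startOf P j ∧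
    sub T (srcOf P j) (lenOf P j) = sub T (startOf P j) (lenOf P j)

/-- `H` is the height function of the LZ-like encoding `P`:
`H i = 0` on length-1 phrases, and otherwise
`H i = H (s_j + (i - b_j) % (b_j - s_j)) + 1` for position `i` of phrase `j`. -/
def IsHeight (P : List (ℕ × ℕ)) (H : ℕ → ℕ) : Prop :=
  ∀ j < P.length, ∀ i, startOf P j ≤ i → i < startOf P j + lenOf P j →
    (lenOf P j = 1 → H i = 0) ∧
    (2 ≤ lenOf P j →
      H i = H (srcOf P j + (i - startOf P j) % (startOf P j - srcOf P j)) + 1)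

/-- The LZ-like encoding `P` of `T` is `h`-bounded. -/
def HBounded (T : List α) (P : List (ℕ × ℕ)) (h : ℕ) : Prop :=
  ∃ H : ℕ → ℕ, IsHeight P H ∧ ∀ i < T.length, H i ≤ h

/-- `z^h(T)`: minimum size of an `h`-bounded LZ-like encoding of `T`. -/
noncomputable def zh (T : List α) (h : ℕ) : ℕ :=
  sInf {k | ∃ P : List (ℕ × ℕ), IsLZ T P ∧ HBounded T P h ∧ P.length = k}

/-- `lpf_T(b)`: length of the longest previous factor at position `b` (0-indexed). -/
noncomputable def lpf (T : List α) (b : ℕ) : ℕ :=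
  sSup {l | b + l ≤ T.length ∧ ∃ s < b, sub T s l = sub T b l}

/-- Number of phrases of the greedy LZ77 parsing of `T[b..)`;
`lzCount T 0 = z(T)` is the size of the greedy LZ77 parsing of `T`. -/
noncomputable def lzCount (T : List α) (b : ℕ) : ℕ :=
  if hb : b < T.length then lzCount T (b + max 1 (lpf T b)) + 1 else 0
termination_by T.length - b
decreasing_by
  have h1 : 1 ≤ max 1 (lpf T b) := le_max_left _ _
  omega

/-- Starting positions of the phrases of the greedy LZ77 parsing of `T` (from `b`). -/
noncomputable def lzStarts (T : List α) (b : ℕ) : List ℕ :=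
  if hb : b < T.length then b :: lzStarts T (b + max 1 (lpf T b)) else []
termination_by T.length - b
decreasing_by
  have h1 : 1 ≤ max 1 (lpf T b) := le_max_left _ _
  omega

/-- Right-hand side of a rule of a run-length straight-line program:
`A → a`, `A → BC`, or `A → B^t`. -/
inductive RLRhs (α : Type*) where
  | leaf : α → RLRhs α
  | pair : ℕ → ℕ → RLRhs α
  | pow : ℕ → ℕ → RLRhs α

/-- A run-length straight-line program (RLSLP): variables are `0, …, m-1`
(the start variable being `m-1`), each with exactly one rule referencing
only smaller variables; run-length rules `A → B^t` require `t ≥ 2`.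
Its size is its number `m` of rules. -/
structure RLSLP (α : Type*) where
  m : ℕ
  m_pos : 0 < m
  rule : ℕ → RLRhs α
  wf_pair : ∀ i b c, i < m → rule i = .pair b c → b < i ∧ c < i
  wf_pow : ∀ i b t, i < m → rule i = .pow b t → b < i ∧ 2 ≤ t

/-- The string derived from variable `i` of `G`. -/
def RLSLP.expand (G : RLSLP α) (i : ℕ) : List α :=
  match G.rule i with
  | .leaf a => [a]
  | .pair b c => if _h : b < i ∧ c < i then G.expand b ++ G.expand c else []
  | .pow b t => if _h : b < i then (List.replicate t (G.expand b)).flatten else []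
termination_by i
decreasing_by all_goals omega

/-- `G` generates the string `T`. -/
def RLSLP.Generates (G : RLSLP α) (T : List α) : Prop := G.expand (G.m - 1) = T

/-- Height of the parse (sub)tree of `G` rooted at variable `i`:
leaf rules `A → a` give leaves of the parse tree. -/
def RLSLP.varHeight (G : RLSLP α) (i : ℕ) : ℕ :=
  match G.rule i with
  | .leaf _ => 0
  | .pair b c => if _h : b < i ∧ c < i then max (G.varHeight b) (G.varHeight c) + 1 else 0
  | .pow b _ => if _h : b < i then G.varHeight b + 1 else 0
termination_by i
decreasing_by all_goals omega

/-- Height of the parse tree of `G`. -/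
def RLSLP.parseHeight (G : RLSLP α) : ℕ := G.varHeight (G.m - 1)

/-- `ĝ_rl(T)`: the size of the smallest RLSLP generating `T`. -/
noncomputable def grl (T : List α) : ℕ :=
  sInf {g | ∃ G : RLSLP α, G.Generates T ∧ G.m = g}

namespace StmtAux

/-! ### startOf/lenOf lemmas -/

theorem startOf_append_left (P Q : List (ℕ × ℕ)) {j : ℕ} (h : j ≤ P.length) :
    startOf (P ++ Q) j = startOf P j := by
  unfold startOf
  rw [List.take_append_of_le_length h]

theorem lenOf_append_left (P Q : List (ℕ × ℕ)) {j : ℕ} (h : j < P.length) :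
    lenOf (P ++ Q) j = lenOf P j := by
  unfold lenOf
  rw [List.getElem?_append_left h]

theorem srcOf_append_left (P Q : List (ℕ × ℕ)) {j : ℕ} (h : j < P.length) :
    srcOf (P ++ Q) j = srcOf P j := by
  unfold srcOf
  rw [List.getElem?_append_left h]

theorem startOf_append_right (P Q : List (ℕ × ℕ)) (j : ℕ) :
    startOf (P ++ Q) (P.length + j) = (P.map Prod.fst).sum + startOf Q j := by
  unfold startOf
  rw [List.take_append, List.map_append, List.sum_append]
  rw [List.take_of_length_le (l := P) (by omega), Nat.add_sub_cancel_left]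

theorem lenOf_append_right (P Q : List (ℕ × ℕ)) (j : ℕ) :
    lenOf (P ++ Q) (P.length + j) = lenOf Q j := by
  unfold lenOf
  rw [List.getElem?_append_right (Nat.le_add_right _ _), Nat.add_sub_cancel_left]

theorem srcOf_append_right (P Q : List (ℕ × ℕ)) (j : ℕ) :
    srcOf (P ++ Q) (P.length + j) = srcOf Q j := by
  unfold srcOf
  rw [List.getElem?_append_right (Nat.le_add_right _ _), Nat.add_sub_cancel_left]

/-- Combined goodness predicate for a parsing placed at absolute offset `b`. -/
def OK (T : List ℕ) (H : ℕ → ℕ) (P : List (ℕ × ℕ)) (b : ℕ) : Prop :=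
  ∀ idx < P.length,
    (1 ≤ lenOf P idx) ∧
    (lenOf P idx = 1 → H (b + startOf P idx) = 0) ∧
    (2 ≤ lenOf P idx →
      srcOf P idx < b + startOf P idx ∧
      sub T (srcOf P idx) (lenOf P idx) = sub T (b + startOf P idx) (lenOf P idx) ∧
      ∀ i, b + startOf P idx ≤ i → i < b + startOf P idx + lenOf P idx →
        H i = H (srcOf P idx + (i - (b + startOf P idx)) % ((b + startOf P idx) - srcOf P idx)) + 1)

theorem OK_nil (T : List ℕ) (H : ℕ → ℕ) (b : ℕ) : OK T H [] b := by
  intro idx h; simp at h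

theorem OK_append {T : List ℕ} {H : ℕ → ℕ} {P Q : List (ℕ × ℕ)} {b : ℕ}
    (hP : OK T H P b) (hQ : OK T H Q (b + (P.map Prod.fst).sum)) :
    OK T H (P ++ Q) b := by
  intro idx hidx
  rw [List.length_append] at hidx
  by_cases h : idx < P.length
  · rw [lenOf_append_left _ _ h, srcOf_append_left _ _ h,
      startOf_append_left _ _ (le_of_lt h)]
    exact hP idx h
  · have hj : idx = P.length + (idx - P.length) := by omega
    rw [hj, lenOf_append_right, srcOf_append_right, startOf_append_right]
    have := hQ (idx - P.length) (by omega)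
    rw [← Nat.add_assoc]
    exact this

theorem OK_single_lit (T : List ℕ) (H : ℕ → ℕ) (b s : ℕ) (hH : H b = 0) :
    OK T H [(1, s)] b := by
  intro idx hidx
  simp only [List.length_singleton] at hidx
  interval_cases idx
  refine ⟨by simp [lenOf], fun _ => ?_, fun h2 => ?_⟩
  · simpa [startOf] using hH
  · simp [lenOf] at h2

theorem OK_single_copy (T : List ℕ) (H : ℕ → ℕ) (b len src : ℕ)
    (h2 : 2 ≤ len) (hlt : src < b) (hmod : len ≤ b - src)
    (hsub : sub T src len = sub T b len)
    (hH : ∀ o < len, H (b + o) = H (src + o) + 1) :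
    OK T H [(len, src)] b := by
  intro idx hidx
  simp only [List.length_singleton] at hidx
  interval_cases idx
  have hlen : lenOf [(len, src)] 0 = len := by simp [lenOf]
  have hsrc : srcOf [(len, src)] 0 = src := by simp [srcOf]
  have hst : startOf [(len, src)] 0 = 0 := by simp [startOf]
  rw [hlen, hsrc, hst]
  refine ⟨by omega, fun h1 => by omega, fun _ => ⟨by omega, by simpa using hsub, ?_⟩⟩
  intro i hi1 hi2
  have ho : i - (b + 0) < len := by omega
  have : (i - (b + 0)) % (b + 0 - src) = i - b := by
    rw [Nat.mod_eq_of_lt (by omega)]; omega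
  rw [this]
  have := hH (i - b) (by omega)
  have hib : b + (i - b) = i := by omega
  rw [hib] at this
  exact this


def NoSq (l : List ℕ) : Prop := ∀ x : List ℕ, x ≠ [] → ¬ (x ++ x) <:+: l

theorem NoSq.of_infix {l w : List ℕ} (h : w <:+: l) (hl : NoSq l) : NoSq w :=
  fun x hx hinf => hl x hx (hinf.trans h)

/-- an infix avoiding the separator lies in one side -/
theorem infix_split {u v w : List ℕ} {z : ℕ} (h : w <:+: u ++ z :: v) (hz : z ∉ w) :
    w <:+: u ∨ w <:+: v := by
  obtain ⟨s, t, hst⟩ := h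
  by_cases h1 : s.length + w.length ≤ u.length
  · left
    have hu : u = (u ++ z :: v).take u.length := by rw [List.take_left]
    rw [← hst] at hu
    rw [List.append_assoc, List.take_append,
      List.take_append,
      List.take_of_length_le (by omega), List.take_of_length_le (by omega)] at hu
    refine ⟨s, t.take (u.length - s.length - w.length), ?_⟩
    conv_rhs => rw [hu]
    rw [List.append_assoc]
  · by_cases h2 : u.length + 1 ≤ s.length
    · right
      have hd : (s ++ (w ++ t)).drop s.length = w ++ t := List.drop_left
      rw [List.append_assoc] at hst
      rw [hst] at hd
      rw [List.drop_append, List.drop_eq_nil_of_le (by omega),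
        List.nil_append,
        show z :: v = [z] ++ v by rfl,
        List.drop_append, List.drop_eq_nil_of_le (by simp; omega),
        List.nil_append] at hd
      have : w <+: v.drop (s.length - u.length - [z].length) := ⟨t, hd.symm⟩
      exact this.isInfix.trans (List.drop_suffix _ _).isInfix
    · exfalso
      apply hz
      have hL : (s ++ (w ++ t))[s.length + (u.length - s.length)]? = w[u.length - s.length]? := by
        rw [List.getElem?_append_right (Nat.le_add_right _ _), Nat.add_sub_cancel_left,
          List.getElem?_append_left (by omega)]
      have hR : (u ++ z :: v)[u.length]? = some z := by
        rw [List.getElem?_append_right (le_refl _), Nat.sub_self]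
        simp
      rw [List.append_assoc] at hst
      rw [hst, show s.length + (u.length - s.length) = u.length by omega, hR] at hL
      exact List.mem_iff_getElem?.mpr ⟨_, hL.symm⟩

theorem noSq_concat {u v : List ℕ} {z : ℕ} (hu : NoSq u) (hv : NoSq v)
    (hzu : z ∉ u) (hzv : z ∉ v) : NoSq (u ++ z :: v) := by
  intro x hx hinf
  by_cases hzx : z ∈ x
  · have h2 : 2 ≤ (x ++ x).count z := by
      have : 1 ≤ x.count z := List.one_le_count_iff.mpr hzx
      simp [List.count_append]; omega
    have hle : (x ++ x).count z ≤ (u ++ z :: v).count z := hinf.sublist.count_le z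
    have : (u ++ z :: v).count z = 1 := by
      simp [List.count_append, List.count_cons,
        List.count_eq_zero_of_not_mem hzu, List.count_eq_zero_of_not_mem hzv]
    omega
  · have hzxx : z ∉ x ++ x := by simp [hzx]
    rcases infix_split hinf hzxx with h | h
    · exact hu x hx h
    · exact hv x hx h




def v2 (n : ℕ) : ℕ := n.factorization 2

theorem v2_pow (d : ℕ) : v2 (2^d) = d := by
  unfold v2
  rw [Nat.Prime.factorization_pow Nat.prime_two]
  simp [Nat.Prime.factorization Nat.prime_two]

theorem pow_v2_dvd (n : ℕ) : 2 ^ v2 n ∣ n := Nat.ordProj_dvd n 2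

theorem not_pow_succ_v2_dvd {n : ℕ} (hn : n ≠ 0) : ¬ 2 ^ (v2 n + 1) ∣ n :=
  Nat.pow_succ_factorization_not_dvd hn Nat.prime_two

theorem pow_dvd_iff_le_v2 {n k : ℕ} (hn : n ≠ 0) : 2 ^ k ∣ n ↔ k ≤ v2 n :=
  Nat.Prime.pow_dvd_iff_le_factorization Nat.prime_two hn

theorem v2_lt_of_lt_pow {x d : ℕ} (hx : x ≠ 0) (h : x < 2^d) : v2 x < d := by
  by_contra hc
  push_neg at hc
  have h1 : 2 ^ v2 x ∣ x := pow_v2_dvd x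
  have h2 : 2 ^ v2 x ≤ x := Nat.le_of_dvd (Nat.pos_of_ne_zero hx) h1
  have h3 : 2 ^ d ≤ 2 ^ v2 x := Nat.pow_le_pow_right (by norm_num) hc
  omega

theorem v2_add_pow {x d : ℕ} (hx : x ≠ 0) (h : x < 2^d) : v2 (x + 2^d) = v2 x := by
  have hv : v2 x < d := v2_lt_of_lt_pow hx h
  have hne : x + 2^d ≠ 0 := by positivity
  have h1 : 2 ^ v2 x ∣ x + 2^d :=
    Nat.dvd_add (pow_v2_dvd x) (pow_dvd_pow 2 (le_of_lt hv))
  have h2 : ¬ 2 ^ (v2 x + 1) ∣ x + 2^d := by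
    intro hdvd
    have hdp : (2:ℕ) ^ (v2 x + 1) ∣ 2 ^ d := pow_dvd_pow 2 (by omega)
    have h3 := Nat.dvd_sub hdvd hdp
    rw [Nat.add_sub_cancel] at h3
    exact not_pow_succ_v2_dvd hx h3
  have hle : v2 x ≤ v2 (x + 2^d) := (pow_dvd_iff_le_v2 hne).mp h1
  have hlt : v2 (x + 2^d) < v2 x + 1 := by
    by_contra hc
    push_neg at hc
    exact h2 ((pow_dvd_iff_le_v2 hne).mpr hc |> fun h => h)
  omega

/-- In any window `[p+1, p+m]`, the position of maximal `v2` is unique. -/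
theorem v2_unique_max {a b M : ℕ} (ha : 0 < a) (hab : a < b)
    (hva : v2 a = M) (hvb : v2 b = M)
    : ∃ c, a < c ∧ c ≤ b ∧ M < v2 c := by
  have hM1 : 1 ≤ 2^M := Nat.one_le_two_pow
  refine ⟨a + 2^M, by omega, ?_, ?_⟩
  · have h1 : 2^M ∣ a := hva ▸ pow_v2_dvd a
    have h2 : 2^M ∣ b := hvb ▸ pow_v2_dvd b
    have : 2^M ∣ b - a := Nat.dvd_sub h2 h1
    have : 2^M ≤ b - a := Nat.le_of_dvd (by omega) this
    omega
  · have h1 : 2^M ∣ a := hva ▸ pow_v2_dvd a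
    obtain ⟨w, hw⟩ := h1
    have hwodd : ¬ 2 ∣ w := by
      intro ⟨w', hw'⟩
      apply not_pow_succ_v2_dvd (show a ≠ 0 by omega)
      rw [hva, hw, hw', pow_succ]
      exact ⟨w', by ring⟩
    have h2w : 2 ∣ w + 1 := by omega
    obtain ⟨w', hw'⟩ := h2w
    have heq : a + 2^M = 2^(M+1) * w' := by
      rw [hw, show 2^M * w + 2^M = 2^M * (w+1) from by ring, hw', pow_succ]
      ring
    have hdvd : 2^(M+1) ∣ a + 2^M := ⟨w', heq⟩
    have := (pow_dvd_iff_le_v2 (show a + 2^M ≠ 0 from by omega)).mp hdvd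
    omega

def ruler : ℕ → List ℕ
  | 0 => []
  | d+1 => ruler d ++ d :: ruler d

theorem ruler_length (d : ℕ) : (ruler d).length = 2^d - 1 := by
  induction d with
  | zero => simp [ruler]
  | succ d ih =>
    simp [ruler, ih]
    have : 1 ≤ 2^d := Nat.one_le_two_pow
    omega

theorem ruler_prefix {a b : ℕ} (h : a ≤ b) : ruler a <+: ruler b := by
  induction b with
  | zero => simp at h; simp [h]
  | succ b ih =>
    rcases Nat.eq_or_lt_of_le h with rfl | hlt
    · rfl
    · exact (ih (by omega)).trans ⟨b :: ruler b, rfl⟩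
      
theorem ruler_mem_lt {d x : ℕ} (h : x ∈ ruler d) : x < d := by
  induction d with
  | zero => simp [ruler] at h
  | succ d ih =>
    simp only [ruler, List.mem_append, List.mem_cons] at h
    rcases h with h | h | h
    · exact (ih h).trans (by omega)
    · omega
    · exact (ih h).trans (by omega)

theorem ruler_get {d i : ℕ} (h : i < 2^d - 1) : (ruler d)[i]? = some (v2 (i+1)) := by
  induction d generalizing i with
  | zero => simp at h
  | succ d ih =>
    have hlen : (ruler d).length = 2^d - 1 := ruler_length d
    by_cases h1 : i < 2^d - 1
    · rw [ruler, List.getElem?_append_left (by omega)]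
      exact ih h1
    · by_cases h2 : i = 2^d - 1
      · have hpos : 1 ≤ 2^d := Nat.one_le_two_pow
        rw [ruler, List.getElem?_append_right (by omega), hlen,
          show i - (2^d - 1) = 0 from by omega]
        simp [show i + 1 = 2^d from by omega, v2_pow]
      · have hpos : 1 ≤ 2^d := Nat.one_le_two_pow
        rw [ruler, List.getElem?_append_right (by omega), hlen]
        have : i - (2^d - 1) = (i - 2^d) + 1 := by omega
        rw [this]
        simp only [List.getElem?_cons_succ]
        rw [ih (by simp [pow_succ] at h ⊢; omega)]
        congr 1
        have hx : i - 2^d + 1 ≠ 0 := by omega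
        have hlt : i - 2^d + 1 < 2^d := by simp [pow_succ] at h; omega
        have := v2_add_pow hx hlt
        rw [show i - 2^d + 1 + 2^d = i + 1 by omega] at this
        omega

theorem ruler_noSq (d : ℕ) : NoSq (ruler d) := by
  rintro x hx ⟨s, t, hst⟩
  have hqpos : 0 < x.length := List.length_pos_iff.mpr hx
  have hlen : s.length + 2 * x.length ≤ 2^d - 1 := by
    have := congrArg List.length hst
    simp [ruler_length] at this
    omega
  have hgetL : ∀ o, o < x.length → (ruler d)[s.length + o]? = x[o]? := by
    intro o ho
    rw [← hst, List.append_assoc, List.getElem?_append_right (Nat.le_add_right _ _),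
      Nat.add_sub_cancel_left, List.getElem?_append_left (by simp; omega),
      List.getElem?_append_left ho]
  have hgetR : ∀ o, o < x.length → (ruler d)[s.length + x.length + o]? = x[o]? := by
    intro o ho
    rw [← hst, List.append_assoc,
      show s.length + x.length + o = s.length + (x.length + o) from by omega,
      List.getElem?_append_right (Nat.le_add_right _ _), Nat.add_sub_cancel_left,
      List.getElem?_append_left (by simp; omega),
      List.getElem?_append_right (Nat.le_add_right _ _), Nat.add_sub_cancel_left]
  set p := s.length with hp
  set q := x.length with hq
  have hval : ∀ u, p+1 ≤ u → u ≤ p + q → v2 u = v2 (u + q) := by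
    intro u hu1 hu2
    have ho : u - (p+1) < q := by omega
    have hL := (hgetL (u - (p+1)) ho).trans (hgetR (u - (p+1)) ho).symm
    rw [ruler_get (show p + (u - (p+1)) < 2^d - 1 from by omega),
      ruler_get (show p + q + (u - (p+1)) < 2^d - 1 from by omega)] at hL
    have := Option.some.inj hL
    rw [show p + (u - (p+1)) + 1 = u from by omega,
      show p + q + (u - (p+1)) + 1 = u + q from by omega] at this
    exact this
  obtain ⟨u₀, hu₀mem, hu₀max⟩ := Finset.exists_max_image (Finset.Icc (p+1) (p+2*q))
    v2 ⟨p+1, by simp; omega⟩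
  simp only [Finset.mem_Icc] at hu₀mem
  set M := v2 u₀ with hM
  have key : ∃ a b, p + 1 ≤ a ∧ a < b ∧ b ≤ p + 2*q ∧ v2 a = M ∧ v2 b = M := by
    by_cases hc : u₀ ≤ p + q
    · exact ⟨u₀, u₀ + q, hu₀mem.1, by omega, by omega, rfl, (hval u₀ hu₀mem.1 hc).symm⟩
    · refine ⟨u₀ - q, u₀, by omega, by omega, hu₀mem.2, ?_, rfl⟩
      have := hval (u₀ - q) (by omega) (by omega)
      rw [show u₀ - q + q = u₀ from by omega] at this
      exact this
  obtain ⟨a, b, hab1, hab2, hab3, hva, hvb⟩ := key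
  obtain ⟨c, hc1, hc2, hc3⟩ := v2_unique_max (show 0 < a from by omega) hab2 hva hvb
  have : v2 c ≤ M := hu₀max c (by simp; omega)
  omega

/-! ### The string family -/

def frag (d a : ℕ) : List ℕ := sub (ruler d) a (2^(d-1))

def tl (d : ℕ) (a : ℕ → ℕ) : ℕ → ℕ → List ℕ
  | 0, _ => []
  | r+1, j => (d + j) :: (frag d (a j) ++ tl d a r (j+1))

def Tstr (d : ℕ) (a : ℕ → ℕ) : List ℕ := ruler d ++ tl d a d 0

theorem two_pow_split {d : ℕ} (hd : 1 ≤ d) : 2^d = 2^(d-1) + 2^(d-1) := by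
  obtain ⟨e, rfl⟩ : ∃ e, d = e + 1 := ⟨d - 1, by omega⟩
  rw [pow_succ]
  simp
  omega

theorem sub_infix (T : List α') (i l : ℕ) : sub T i l <:+: T :=
  (List.take_prefix _ _).isInfix.trans (List.drop_suffix _ _).isInfix

theorem sub_prefix {T w : List α'} (h : w <+: T) {i l : ℕ} (hl : i + l ≤ w.length) :
    sub T i l = sub w i l := by
  obtain ⟨t, rfl⟩ := h
  unfold sub
  rw [List.drop_append, List.take_append]
  have h1 : l ≤ (w.drop i).length := by simp; omega
  rw [Nat.sub_eq_zero_of_le h1, List.take_zero, List.append_nil]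

theorem frag_length {d a : ℕ} (hd : 1 ≤ d) (ha : a < 2^(d-1)) :
    (frag d a).length = 2^(d-1) := by
  have h2 := two_pow_split hd
  have h3 : (frag d a).length = min (2^(d-1)) ((ruler d).length - a) := by simp [frag, sub]
  rw [ruler_length] at h3
  omega

theorem frag_infix (d a : ℕ) : frag d a <:+: ruler d := sub_infix _ _ _

theorem frag_mem_lt {d a x : ℕ} (h : x ∈ frag d a) : x < d :=
  ruler_mem_lt ((frag_infix d a).mem h)

theorem tl_mem {d r j x : ℕ} {a : ℕ → ℕ} (h : x ∈ tl d a r j) :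
    x < d ∨ (d + j ≤ x ∧ x < d + j + r) := by
  induction r generalizing j with
  | zero => simp [tl] at h
  | succ r ih =>
    simp only [tl, List.mem_cons, List.mem_append] at h
    rcases h with rfl | h | h
    · omega
    · exact Or.inl (frag_mem_lt h)
    · rcases ih h with h | h
      · exact Or.inl h
      · omega

theorem tl_length {d : ℕ} {a : ℕ → ℕ} (hd : 1 ≤ d) (ha : ∀ j, a j < 2^(d-1)) :
    ∀ r j, (tl d a r j).length = r * (1 + 2^(d-1)) := by
  intro r
  induction r with
  | zero => simp [tl]
  | succ r ih =>
    intro j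
    simp [tl, frag_length hd (ha j), ih (j+1)]
    ring

theorem Tstr_length {d : ℕ} {a : ℕ → ℕ} (hd : 1 ≤ d) (ha : ∀ j, a j < 2^(d-1)) :
    (Tstr d a).length = 2^d - 1 + d * (1 + 2^(d-1)) := by
  simp [Tstr, ruler_length, tl_length hd ha]

theorem tl_noSq {d : ℕ} {a : ℕ → ℕ} :
    ∀ r j (w : List ℕ), w <:+: ruler d → NoSq (w ++ tl d a r j) := by
  intro r
  induction r with
  | zero =>
    intro j w hw
    rw [show tl d a 0 j = [] from rfl, List.append_nil]
    exact (ruler_noSq d).of_infix hw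
  | succ r ih =>
    intro j w hw
    show NoSq (w ++ (d + j) :: (frag d (a j) ++ tl d a r (j+1)))
    apply noSq_concat ((ruler_noSq d).of_infix hw) (ih (j+1) _ (frag_infix d (a j)))
    · intro hmem
      exact absurd (ruler_mem_lt (hw.mem hmem)) (by omega)
    · intro hmem
      rcases List.mem_append.mp hmem with h | h
      · exact absurd (frag_mem_lt h) (by omega)
      · rcases tl_mem h with h | h <;> omega

theorem Tstr_noSq (d : ℕ) (a : ℕ → ℕ) : NoSq (Tstr d a) :=
  tl_noSq d 0 (ruler d) (List.infix_refl _)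

theorem Tstr_mem_lt {d x : ℕ} {a : ℕ → ℕ} (h : x ∈ Tstr d a) : x < 2 * d := by
  rcases List.mem_append.mp h with h | h
  · have := ruler_mem_lt h; omega
  · rcases tl_mem h with h | h <;> omega

theorem Tstr_ne_nil {d : ℕ} {a : ℕ → ℕ} (hd : 1 ≤ d) : Tstr d a ≠ [] := by
  intro h
  have h2 := congrArg List.length h
  rw [Tstr, List.length_append, ruler_length, List.length_nil] at h2
  have : 2^1 ≤ 2^d := Nat.pow_le_pow_right (by norm_num) hd
  omega

/-! ### Height function -/

def Hr (x : ℕ) : ℕ :=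
  if h : x ≤ 3 ∨ x = 2 ^ (Nat.log 2 x) then 0
  else Hr (x - 2 ^ (Nat.log 2 x)) + 1
termination_by x
decreasing_by
  push_neg at h
  have h1 : 1 ≤ 2 ^ Nat.log 2 x := Nat.one_le_two_pow
  omega

theorem Hr_eq (x : ℕ) : Hr x =
    if x ≤ 3 ∨ x = 2 ^ (Nat.log 2 x) then 0
    else Hr (x - 2 ^ (Nat.log 2 x)) + 1 := by
  rw [Hr]
  simp

theorem Hr_small {x : ℕ} (h : x ≤ 3) : Hr x = 0 := by
  rw [Hr_eq, if_pos (Or.inl h)]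

theorem Hr_pow (t : ℕ) : Hr (2^t) = 0 := by
  have hlog : Nat.log 2 (2^t) = t := Nat.log_pow (by norm_num) t
  rw [Hr_eq, if_pos (Or.inr (by rw [hlog]))]

theorem Hr_step {t x : ℕ} (ht : 1 ≤ t) (h1 : 2^(t+1) + 1 ≤ x) (h2 : x ≤ 2^(t+2) - 1) :
    Hr x = Hr (x - 2^(t+1)) + 1 := by
  have hp1 : (4:ℕ) ≤ 2^(t+1) := by
    calc (4:ℕ) = 2^2 := by norm_num
    _ ≤ 2^(t+1) := Nat.pow_le_pow_right (by norm_num) (by omega)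
  have hlog : Nat.log 2 x = t + 1 := by
    apply Nat.log_eq_of_pow_le_of_lt_pow (by omega)
    have : (2:ℕ)^(t+2) = 2^(t+1) + 2^(t+1) := by rw [pow_succ]; ring
    omega
  rw [Hr_eq, if_neg (by rw [hlog]; omega), hlog]

theorem Hr_le_log : ∀ x, Hr x ≤ Nat.log 2 x := by
  intro x
  induction x using Nat.strong_induction_on with
  | _ x ih =>
    by_cases hc : x ≤ 3 ∨ x = 2 ^ (Nat.log 2 x)
    · rw [Hr_eq, if_pos hc]; exact Nat.zero_le _
    rw [Hr_eq, if_neg hc]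
    push_neg at hc
    obtain ⟨hc1, hc2⟩ := hc
    have hx0 : x ≠ 0 := by omega
    have hple : 2 ^ Nat.log 2 x ≤ x := Nat.pow_log_le_self 2 hx0
    have hplt : x < 2 ^ (Nat.log 2 x + 1) := Nat.lt_pow_succ_log_self (by norm_num) x
    have hpow : (2:ℕ)^(Nat.log 2 x + 1) = 2^(Nat.log 2 x) + 2^(Nat.log 2 x) := by
      rw [pow_succ]; ring
    have hy0 : x - 2^(Nat.log 2 x) ≠ 0 := by omega
    have hylt : x - 2^(Nat.log 2 x) < 2^(Nat.log 2 x) := by omega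
    have h1le : 1 ≤ (2:ℕ)^(Nat.log 2 x) := Nat.one_le_two_pow
    have hih := ih (x - 2^(Nat.log 2 x)) (by omega)
    have hloglt : Nat.log 2 (x - 2^(Nat.log 2 x)) < Nat.log 2 x :=
      Nat.log_lt_of_lt_pow hy0 hylt
    omega

def Hfun (d : ℕ) (a : ℕ → ℕ) (i : ℕ) : ℕ :=
  if i < 2^d - 1 then Hr (i+1)
  else if (i - (2^d - 1)) % (1 + 2^(d-1)) = 0 then 0
  else Hr (a ((i - (2^d - 1)) / (1 + 2^(d-1))) + (i - (2^d - 1)) % (1 + 2^(d-1))) + 1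

theorem Hr_lt_of_lt_pow {x d : ℕ} (hx : 1 ≤ x) (h : x < 2^d) : Hr x < d := by
  have h1 := Hr_le_log x
  have h2 : Nat.log 2 x < d := Nat.log_lt_of_lt_pow (by omega) h
  omega

theorem Hfun_le {d : ℕ} {a : ℕ → ℕ} (hd : 1 ≤ d) (ha : ∀ j, a j < 2^(d-1)) (i : ℕ) :
    Hfun d a i ≤ d := by
  have h2d := two_pow_split hd
  unfold Hfun
  split
  · rename_i h
    have := Hr_lt_of_lt_pow (show 1 ≤ i + 1 from by omega) (show i + 1 < 2^d from by
      have : 1 ≤ 2^d := Nat.one_le_two_pow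
      omega)
    omega
  · split
    · omega
    · rename_i h hr
      set r := (i - (2^d - 1)) % (1 + 2^(d-1)) with hrr
      have hrle : r < 1 + 2^(d-1) := Nat.mod_lt _ (by positivity)
      have harg : 1 ≤ a ((i - (2^d - 1)) / (1 + 2^(d-1))) + r := by omega
      have harg2 : a ((i - (2^d - 1)) / (1 + 2^(d-1))) + r < 2^d := by
        have := ha ((i - (2^d - 1)) / (1 + 2^(d-1)))
        omega
      have := Hr_lt_of_lt_pow harg harg2
      omega

/-! ### Content lemmas for the parsing -/

theorem ruler_prefix_Tstr {d u : ℕ} {a : ℕ → ℕ} (h : u ≤ d) :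
    ruler u <+: Tstr d a :=
  (ruler_prefix h).trans (List.prefix_append _ _)

theorem copy_content {d u : ℕ} {a : ℕ → ℕ} (h : u + 2 ≤ d) :
    sub (Tstr d a) 0 (2^(u+1) - 1) = sub (Tstr d a) (2^(u+1)) (2^(u+1) - 1) := by
  have hlen1 : (ruler (u+1)).length = 2^(u+1) - 1 := ruler_length (u+1)
  have hlen2 : (ruler (u+2)).length = 2^(u+2) - 1 := ruler_length (u+2)
  have hpow : (2:ℕ)^(u+2) = 2^(u+1) + 2^(u+1) := by rw [pow_succ]; ring
  have h1le : 1 ≤ (2:ℕ)^(u+1) := Nat.one_le_two_pow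
  have hw : ruler (u+2) <+: Tstr d a := ruler_prefix_Tstr h
  rw [sub_prefix hw (by omega), sub_prefix hw (by omega)]
  show sub (ruler (u+1) ++ (u+1) :: ruler (u+1)) 0 _ =
    sub (ruler (u+1) ++ (u+1) :: ruler (u+1)) _ _
  unfold sub
  rw [List.drop_zero, List.take_append, List.take_of_length_le (by omega),
    Nat.sub_eq_zero_of_le (by omega), List.take_zero, List.append_nil]
  rw [List.drop_append, List.drop_eq_nil_of_le (by omega), List.nil_append,
    hlen1, show 2^(u+1) - (2^(u+1) - 1) = 1 from by omega, List.drop_one, List.tail_cons,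
    List.take_of_length_le (by omega)]

theorem frag_src_content {d j : ℕ} {a : ℕ → ℕ} (hd : 1 ≤ d) (ha : ∀ j', a j' < 2^(d-1)) :
    sub (Tstr d a) (a j) (2^(d-1)) = frag d (a j) := by
  have h2 := two_pow_split hd
  have hw : ruler d <+: Tstr d a := by rw [Tstr]; exact List.prefix_append _ _
  rw [sub_prefix hw (by rw [ruler_length]; have := ha j; omega)]
  rfl

theorem tl_drop_blocks {d : ℕ} {a : ℕ → ℕ} (hd : 1 ≤ d) (ha : ∀ j', a j' < 2^(d-1)) :
    ∀ i r j, i ≤ r →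
      (tl d a r j).drop (i * (1 + 2^(d-1))) = tl d a (r-i) (j+i) := by
  intro i
  induction i with
  | zero => intro r j _; simp
  | succ i ih =>
    intro r j hir
    obtain ⟨r', rfl⟩ : ∃ r', r = r' + 1 := ⟨r - 1, by omega⟩
    have hstep : (tl d a (r'+1) j).drop (1 + 2^(d-1)) = tl d a r' (j+1) := by
      show ((d + j) :: (frag d (a j) ++ tl d a r' (j+1))).drop (1 + 2^(d-1)) = _
      rw [show (1 + 2^(d-1)) = 2^(d-1) + 1 from by omega]
      rw [List.drop_succ_cons]
      exact List.drop_left' (frag_length hd (ha j))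
    calc (tl d a (r'+1) j).drop ((i+1) * (1 + 2^(d-1)))
        = ((tl d a (r'+1) j).drop (1 + 2^(d-1))).drop (i * (1 + 2^(d-1))) := by
          rw [List.drop_drop]; congr 1; ring
      _ = (tl d a r' (j+1)).drop (i * (1 + 2^(d-1))) := by rw [hstep]
      _ = tl d a (r' - i) (j + 1 + i) := ih r' (j+1) (by omega)
      _ = tl d a (r' + 1 - (i+1)) (j + (i+1)) := by congr 1 <;> omega

theorem frag_dst_content {d j : ℕ} {a : ℕ → ℕ} (hd : 1 ≤ d) (ha : ∀ j', a j' < 2^(d-1))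
    (hj : j < d) :
    sub (Tstr d a) (2^d - 1 + j * (1 + 2^(d-1)) + 1) (2^(d-1)) = frag d (a j) := by
  have hblocks := tl_drop_blocks hd ha j d 0 (le_of_lt hj)
  obtain ⟨r', hr'⟩ : ∃ r', d - j = r' + 1 := ⟨d - j - 1, by omega⟩
  rw [hr'] at hblocks
  have hsplit : (tl d a d 0).drop (j * (1 + 2^(d-1)) + 1)
      = ((tl d a d 0).drop (j * (1 + 2^(d-1)))).drop 1 := by
    rw [List.drop_drop]
  have hdrop : (Tstr d a).drop (2^d - 1 + j * (1 + 2^(d-1)) + 1)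
      = frag d (a (0+j)) ++ tl d a r' (0+j+1) := by
    rw [Tstr, List.drop_append, List.drop_eq_nil_of_le
      (by rw [ruler_length]; omega), List.nil_append, ruler_length,
      show 2^d - 1 + j * (1 + 2^(d-1)) + 1 - (2^d - 1) = j * (1 + 2^(d-1)) + 1 from by omega,
      hsplit, hblocks]
    rfl
  unfold sub
  rw [hdrop, List.take_append_of_le_length (by rw [frag_length hd (ha (0+j))]),
    List.take_of_length_le (by rw [frag_length hd (ha (0+j))]), Nat.zero_add]

/-! ### The parsing -/

def Pr (t : ℕ) : List (ℕ × ℕ) :=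
  (1,0) :: (List.range t).flatMap (fun u => [(1,0), (2^(u+1) - 1, 0)])

def Pfm (d : ℕ) (a : ℕ → ℕ) (m : ℕ) : List (ℕ × ℕ) :=
  (List.range m).flatMap (fun j => [(1,0), (2^(d-1), a j)])

def Pfull (d : ℕ) (a : ℕ → ℕ) : List (ℕ × ℕ) := Pr (d-1) ++ Pfm d a d

theorem Pr_succ (t : ℕ) : Pr (t+1) = Pr t ++ [(1,0), (2^(t+1) - 1, 0)] := by
  simp [Pr, List.range_succ]

theorem Pfm_succ (d m : ℕ) (a : ℕ → ℕ) :
    Pfm d a (m+1) = Pfm d a m ++ [(1,0), (2^(d-1), a m)] := by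
  simp [Pfm, List.range_succ]

theorem Pr_sum (t : ℕ) : ((Pr t).map Prod.fst).sum = 2^(t+1) - 1 := by
  induction t with
  | zero => simp [Pr]
  | succ t ih =>
    rw [Pr_succ, List.map_append, List.sum_append, ih]
    have h1 : 1 ≤ (2:ℕ)^(t+1) := Nat.one_le_two_pow
    have hpow : (2:ℕ)^(t+2) = 2^(t+1) + 2^(t+1) := by rw [pow_succ]; ring
    simp
    omega

theorem Pr_length (t : ℕ) : (Pr t).length = 2*t + 1 := by
  induction t with
  | zero => simp [Pr]
  | succ t ih => rw [Pr_succ, List.length_append, ih]; simp; omega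

theorem Pfm_sum (d m : ℕ) (a : ℕ → ℕ) :
    ((Pfm d a m).map Prod.fst).sum = m * (1 + 2^(d-1)) := by
  induction m with
  | zero => simp [Pfm]
  | succ m ih =>
    rw [Pfm_succ, List.map_append, List.sum_append, ih]
    simp
    ring

theorem Pfm_length (d m : ℕ) (a : ℕ → ℕ) : (Pfm d a m).length = 2*m := by
  induction m with
  | zero => simp [Pfm]
  | succ m ih => rw [Pfm_succ, List.length_append, ih]; simp; omega

theorem OK_Pr {d : ℕ} {a : ℕ → ℕ} (hd : 2 ≤ d) :
    ∀ t, t + 1 ≤ d → OK (Tstr d a) (Hfun d a) (Pr t) 0 := by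
  have hL2 : 2^1 ≤ 2^d := Nat.pow_le_pow_right (by norm_num) (by omega)
  intro t
  induction t with
  | zero =>
    intro _
    apply OK_single_lit
    rw [Hfun, if_pos (by omega)]
    exact Hr_small (by norm_num)
  | succ t ih =>
    intro ht
    have h1le : 1 ≤ (2:ℕ)^(t+1) := Nat.one_le_two_pow
    have hpow : (2:ℕ)^(t+2) = 2^(t+1) + 2^(t+1) := by rw [pow_succ]; ring
    have hpowd : 2^(t+2) ≤ 2^d := Nat.pow_le_pow_right (by norm_num) (by omega)
    rw [Pr_succ, show ([(1,0), (2^(t+1) - 1, 0)] : List (ℕ×ℕ))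
      = [(1,0)] ++ [(2^(t+1) - 1, 0)] from rfl]
    apply OK_append (ih (by omega))
    apply OK_append
    · -- separator literal at position 2^(t+1) - 1
      rw [Pr_sum]
      apply OK_single_lit
      rw [zero_add, Hfun, if_pos (by omega)]
      rw [show 2^(t+1) - 1 + 1 = 2^(t+1) from by omega]
      exact Hr_pow (t+1)
    · -- copy phrase at position 2^(t+1)
      rw [Pr_sum]
      have hb : 0 + (2^(t+1) - 1) + ([(1,0)].map Prod.fst).sum = 2^(t+1) := by simp; omega
      rw [hb]
      rcases Nat.eq_or_lt_of_le (show 1 ≤ t + 1 from by omega) with h1 | h1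
      · -- t = 0 : copy phrase has length 1, it is a literal
        have ht0 : t = 0 := by omega
        subst ht0
        apply OK_single_lit
        rw [Hfun, if_pos (by norm_num; omega)]
        exact Hr_small (by norm_num)
      · -- t ≥ 1
        have ht1 : 1 ≤ t := by omega
        have h2t : 2 ≤ 2^t := by
          calc (2:ℕ) = 2^1 := by norm_num
          _ ≤ 2^t := Nat.pow_le_pow_right (by norm_num) ht1
        apply OK_single_copy
        · omega
        · omega
        · omega
        · exact copy_content (by omega)
        · intro o ho
          rw [Hfun, if_pos (by omega), Hfun, if_pos (by omega)]
          rw [show 2^(t+1) + o + 1 = 2^(t+1) + (o + 1) from by omega]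
          rw [Hr_step ht1 (by omega) (by omega), zero_add]
          congr 2
          omega

theorem OK_Pfm {d : ℕ} {a : ℕ → ℕ} (hd : 2 ≤ d) (ha : ∀ j', a j' < 2^(d-1)) :
    ∀ m, m ≤ d → OK (Tstr d a) (Hfun d a) (Pfm d a m) (2^d - 1) := by
  have h2 := two_pow_split (show 1 ≤ d from by omega)
  have hL2 : 2^1 ≤ 2^(d-1) := Nat.pow_le_pow_right (by norm_num) (by omega)
  intro m
  induction m with
  | zero => intro _; exact OK_nil _ _ _
  | succ m ih =>
    intro hm
    rw [Pfm_succ, show ([(1,0), (2^(d-1), a m)] : List (ℕ×ℕ))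
      = [(1,0)] ++ [(2^(d-1), a m)] from rfl]
    apply OK_append (ih (by omega))
    apply OK_append
    · rw [Pfm_sum]
      apply OK_single_lit
      rw [Hfun, if_neg (by omega), if_pos]
      rw [show 2^d - 1 + m * (1 + 2^(d-1)) - (2^d - 1) = m * (1 + 2^(d-1)) from by omega]
      simp
    · rw [Pfm_sum]
      have hb : 2^d - 1 + m * (1 + 2^(d-1)) + ([(1,0)].map Prod.fst).sum
          = 2^d - 1 + m * (1 + 2^(d-1)) + 1 := by simp
      rw [hb]
      have ham := ha m
      apply OK_single_copy
      · omega
      · omega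
      · omega
      · rw [frag_src_content (by omega) ha, frag_dst_content (by omega) ha (by omega)]
      · intro o ho
        have hkey : 2^d - 1 + m * (1 + 2^(d-1)) + 1 + o - (2^d - 1) =
            m * (1 + 2^(d-1)) + (1 + o) := by omega
        rw [Hfun, if_neg (by omega), hkey]
        have hmod : (m * (1 + 2^(d-1)) + (1 + o)) % (1 + 2^(d-1)) = 1 + o := by
          rw [show m * (1 + 2^(d-1)) = (1 + 2^(d-1)) * m from by ring, Nat.mul_add_mod]
          exact Nat.mod_eq_of_lt (by omega)
        have hdiv : (m * (1 + 2^(d-1)) + (1 + o)) / (1 + 2^(d-1)) = m := by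
          rw [show m * (1 + 2^(d-1)) = (1 + 2^(d-1)) * m from by ring,
            Nat.mul_add_div (by omega), Nat.div_eq_of_lt (by omega)]
          omega
        rw [if_neg (by omega), hmod, hdiv]
        rw [Hfun, if_pos (by omega)]
        congr 2
        omega

theorem Pfull_IsLZ {d : ℕ} {a : ℕ → ℕ} (hd : 2 ≤ d) (ha : ∀ j', a j' < 2^(d-1)) :
    IsLZ (Tstr d a) (Pfull d a) ∧ IsHeight (Pfull d a) (Hfun d a) := by
  have hdd : (d - 1) + 1 = d := by omega
  have hOK : OK (Tstr d a) (Hfun d a) (Pfull d a) 0 := by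
    apply OK_append (OK_Pr hd (d-1) (by omega))
    rw [Pr_sum, hdd, zero_add]
    exact OK_Pfm hd ha d (le_refl d)
  have hsum : ((Pfull d a).map Prod.fst).sum = (Tstr d a).length := by
    rw [Pfull, List.map_append, List.sum_append, Pr_sum, hdd, Pfm_sum,
      Tstr_length (by omega) ha]
  refine ⟨⟨?_, hsum, ?_⟩, ?_⟩
  · -- positivity of phrase lengths
    intro q hq
    rcases List.mem_append.mp hq with h | h
    · rcases List.mem_cons.mp h with rfl | h
      · norm_num
      · obtain ⟨u, _, h⟩ := List.mem_flatMap.mp h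
        have h1le : 1 ≤ (2:ℕ)^(u+1) := Nat.one_le_two_pow
        rcases List.mem_cons.mp h with rfl | h
        · norm_num
        · rcases List.mem_cons.mp h with rfl | h
          · simp; omega
          · simp at h
    · obtain ⟨u, _, h⟩ := List.mem_flatMap.mp h
      have h1le : 1 ≤ (2:ℕ)^(d-1) := Nat.one_le_two_pow
      rcases List.mem_cons.mp h with rfl | h
      · norm_num
      · rcases List.mem_cons.mp h with rfl | h
        · simp; omega
        · simp at h
  · -- LZ source conditions
    intro j hj h2j
    have := hOK j hj
    rw [zero_add] at this
    exact ⟨(this.2.2 h2j).1, (this.2.2 h2j).2.1⟩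
  · -- height conditions
    intro j hj i hi1 hi2
    have hOKj := hOK j hj
    rw [zero_add] at hOKj
    constructor
    · intro h1
      have : i = startOf (Pfull d a) j := by omega
      rw [this]
      exact hOKj.2.1 h1
    · intro h2
      exact (hOKj.2.2 h2).2.2 i hi1 hi2

theorem zh_Tstr_le {d h : ℕ} {a : ℕ → ℕ} (hd : 2 ≤ d) (ha : ∀ j', a j' < 2^(d-1))
    (hh : d ≤ h) : zh (Tstr d a) h ≤ 4*d - 1 := by
  apply Nat.sInf_le
  refine ⟨Pfull d a, (Pfull_IsLZ hd ha).1, ⟨Hfun d a, (Pfull_IsLZ hd ha).2, ?_⟩, ?_⟩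
  · intro i _
    exact le_trans (Hfun_le (by omega) ha i) hh
  · rw [Pfull, List.length_append, Pr_length, Pfm_length]
    omega

/-! ### Grammar lemmas -/

theorem expand_leaf {α' : Type*} {G : RLSLP α'} {i : ℕ} {x : α'} (h : G.rule i = .leaf x) :
    G.expand i = [x] := by
  rw [RLSLP.expand, h]

theorem expand_pair {α' : Type*} {G : RLSLP α'} {i b c : ℕ} (h : G.rule i = .pair b c)
    (hb : b < i) (hc : c < i) : G.expand i = G.expand b ++ G.expand c := by
  rw [RLSLP.expand, h]
  simp [hb, hc]

theorem expand_pow {α' : Type*} {G : RLSLP α'} {i b t : ℕ} (h : G.rule i = .pow b t)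
    (hb : b < i) : G.expand i = (List.replicate t (G.expand b)).flatten := by
  rw [RLSLP.expand, h]
  simp [hb]

theorem expand_ne_nil {α' : Type*} {G : RLSLP α'} : ∀ i < G.m, G.expand i ≠ [] := by
  intro i
  induction i using Nat.strong_induction_on with
  | _ i ih =>
    intro him
    match h : G.rule i with
    | .leaf x => rw [expand_leaf h]; simp
    | .pair b c =>
      obtain ⟨hb, hc⟩ := G.wf_pair i b c him h
      rw [expand_pair h hb hc]
      have := ih b hb (by omega)
      simp [this]
    | .pow b t =>
      obtain ⟨hb, ht⟩ := G.wf_pow i b t him h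
      rw [expand_pow h hb]
      have hne := ih b hb (by omega)
      intro hcon
      have := congrArg List.length hcon
      simp [List.length_flatten, List.map_replicate, List.sum_replicate] at this
      rcases this with h1 | h1
      · omega
      · exact hne h1

theorem expand_congr {α' : Type*} {G G' : RLSLP α'} :
    ∀ i, (∀ j ≤ i, G.rule j = G'.rule j) → G.expand i = G'.expand i := by
  intro i
  induction i using Nat.strong_induction_on with
  | _ i ih =>
    intro hagree
    have hi : G.rule i = G'.rule i := hagree i (le_refl i)
    match h : G.rule i with
    | .leaf x => rw [expand_leaf h, expand_leaf (hi ▸ h)]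
    | .pair b c =>
      rw [RLSLP.expand, h, RLSLP.expand, ← hi, h]
      by_cases hbc : b < i ∧ c < i
      · simp only [dif_pos hbc]
        rw [ih b hbc.1 (fun j hj => hagree j (by omega)),
          ih c hbc.2 (fun j hj => hagree j (by omega))]
      · simp only [dif_neg hbc]
    | .pow b t =>
      rw [RLSLP.expand, h, RLSLP.expand, ← hi, h]
      by_cases hb : b < i
      · simp only [dif_pos hb]
        rw [ih b hb (fun j hj => hagree j (by omega))]
      · simp only [dif_neg hb]

theorem exists_grammar {α' : Type*} : ∀ (T : List α'), T ≠ [] → ∃ G : RLSLP α', G.Generates T := by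
  intro T
  induction T with
  | nil => intro h; exact absurd rfl h
  | cons x rest ih =>
    intro _
    rcases rest with _ | ⟨y, rest'⟩
    · refine ⟨⟨1, one_pos, fun _ => .leaf x, ?_, ?_⟩, ?_⟩
      · intro i b c _ h; simp at h
      · intro i b t _ h; simp at h
      · show RLSLP.expand _ (1-1) = [x]
        exact expand_leaf rfl
    · obtain ⟨G', hG'⟩ := ih (by simp)
      refine ⟨⟨G'.m + 2, by omega, fun i =>
        if i < G'.m then G'.rule i else if i = G'.m then .leaf x else .pair G'.m (G'.m - 1),
        ?_, ?_⟩, ?_⟩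
      · intro i b c him h
        by_cases h1 : i < G'.m
        · rw [if_pos h1] at h
          exact G'.wf_pair i b c h1 h
        · by_cases h2 : i = G'.m
          · rw [if_neg h1, if_pos h2] at h; simp at h
          · rw [if_neg h1, if_neg h2] at h
            have hm := G'.m_pos
            injection h with hb hc
            omega
      · intro i b t him h
        by_cases h1 : i < G'.m
        · rw [if_pos h1] at h
          exact G'.wf_pow i b t h1 h
        · by_cases h2 : i = G'.m
          · rw [if_neg h1, if_pos h2] at h; simp at h
          · rw [if_neg h1, if_neg h2] at h; simp at h
      · show RLSLP.expand _ (G'.m + 2 - 1) = x :: y :: rest'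
        have hm := G'.m_pos
        set G : RLSLP α' := ⟨G'.m + 2, by omega, fun i =>
          if i < G'.m then G'.rule i else if i = G'.m then .leaf x else .pair G'.m (G'.m - 1),
          _, _⟩ with hG
        have h1 : G.rule (G'.m + 1) = .pair G'.m (G'.m - 1) := by
          show (if G'.m + 1 < G'.m then _ else if G'.m + 1 = G'.m then _ else _) = _
          rw [if_neg (by omega), if_neg (by omega)]
        have h2 : G.rule G'.m = .leaf x := by
          show (if G'.m < G'.m then _ else if G'.m = G'.m then _ else _) = _
          rw [if_neg (by omega), if_pos rfl]
        have h3 : G.expand (G'.m - 1) = G'.expand (G'.m - 1) := by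
          apply expand_congr
          intro j hj
          show (if j < G'.m then _ else _) = _
          rw [if_pos (by omega)]
        rw [show G'.m + 2 - 1 = G'.m + 1 from by omega,
          expand_pair h1 (by omega) (by omega), expand_leaf h2, h3, hG']
        rfl

theorem grl_le_elim {T : List ℕ} (h : T ≠ []) {g : ℕ} (hle : grl T ≤ g) :
    ∃ G : RLSLP ℕ, G.Generates T ∧ G.m ≤ g := by
  have hne : {g' | ∃ G : RLSLP ℕ, G.Generates T ∧ G.m = g'}.Nonempty := by
    obtain ⟨G, hG⟩ := exists_grammar T h
    exact ⟨G.m, G, hG, rfl⟩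
  obtain ⟨G, hG, hm⟩ := Nat.sInf_mem hne
  exact ⟨G, hG, by rw [hm]; exact hle⟩

/-! ### Descriptions and recovery -/

def expandD (g σ : ℕ) (f : Fin g → Fin σ ⊕ Fin g × Fin g) : ℕ → List ℕ :=
  fun i =>
    if hi : i < g then
      match f ⟨i, hi⟩ with
      | .inl s => [s.val]
      | .inr (b, c) =>
        if hbc : b.val < i ∧ c.val < i then
          expandD g σ f b.val ++ expandD g σ f c.val
        else []
    else []
termination_by i => i
decreasing_by
  · exact hbc.1
  · exact hbc.2

def descOf (G : RLSLP ℕ) (g σ : ℕ) (hσ : 0 < σ) : Fin g → Fin σ ⊕ Fin g × Fin g :=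
  fun i => match G.rule i.val with
  | .leaf s => if hs : s < σ then .inl ⟨s, hs⟩ else .inl ⟨0, hσ⟩
  | .pair b c => if hbc : b < g ∧ c < g then .inr (⟨b, hbc.1⟩, ⟨c, hbc.2⟩) else .inl ⟨0, hσ⟩
  | .pow _ _ => .inl ⟨0, hσ⟩

theorem recover {G : RLSLP ℕ} {g σ : ℕ} (hσ : 0 < σ) (hmg : G.m ≤ g) :
    ∀ i < G.m, NoSq (G.expand i) → (∀ x ∈ G.expand i, x < σ) →
      expandD g σ (descOf G g σ hσ) i = G.expand i := by
  intro i
  induction i using Nat.strong_induction_on with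
  | _ i ih =>
    intro him hns halpha
    have hig : i < g := by omega
    match h : G.rule i with
    | .leaf s =>
      have hex : G.expand i = [s] := expand_leaf h
      have hs : s < σ := halpha s (by rw [hex]; simp)
      have hdesc : descOf G g σ hσ ⟨i, hig⟩ = .inl ⟨s, hs⟩ := by
        simp only [descOf, h, dif_pos hs]
      rw [expandD, dif_pos hig, hdesc, hex]
    | .pair b c =>
      obtain ⟨hb, hc⟩ := G.wf_pair i b c him h
      have hex : G.expand i = G.expand b ++ G.expand c := expand_pair h hb hc
      have hdesc : descOf G g σ hσ ⟨i, hig⟩ =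
          .inr (⟨b, by omega⟩, ⟨c, by omega⟩) := by
        simp only [descOf, h, dif_pos (show b < g ∧ c < g from by omega)]
      have hinfb : G.expand b <:+: G.expand i := ⟨[], G.expand c, by rw [hex]; simp⟩
      have hinfc : G.expand c <:+: G.expand i := ⟨G.expand b, [], by rw [hex]; simp⟩
      rw [expandD, dif_pos hig, hdesc]
      simp only [dif_pos (show b < i ∧ c < i from ⟨hb, hc⟩)]
      rw [ih b hb (by omega) (NoSq.of_infix hinfb hns)
          (fun x hx => halpha x (by rw [hex]; exact List.mem_append_left _ hx)),
        ih c hc (by omega) (NoSq.of_infix hinfc hns)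
          (fun x hx => halpha x (by rw [hex]; exact List.mem_append_right _ hx)), hex]
    | .pow b t =>
      obtain ⟨hb, ht⟩ := G.wf_pow i b t him h
      exfalso
      have hex : G.expand i = (List.replicate t (G.expand b)).flatten := expand_pow h hb
      have hne : G.expand b ≠ [] := expand_ne_nil b (by omega)
      apply hns (G.expand b) hne
      rw [hex]
      obtain ⟨t', rfl⟩ : ∃ t', t = t' + 2 := ⟨t - 2, by omega⟩
      refine ⟨[], (List.replicate t' (G.expand b)).flatten, ?_⟩
      rw [List.nil_append]
      rw [show t' + 2 = 1 + (1 + t') from by omega, List.replicate_add, List.replicate_add]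
      simp [List.flatten_append]

/-! ### Injectivity of the family -/

theorem frag_getElem {d a o : ℕ} (ha : a < 2^(d-1)) (ho : o < 2^(d-1))
    (hao : a + o < 2^d - 1) :
    (frag d a)[o]? = some (v2 (a + o + 1)) := by
  unfold frag sub
  rw [List.getElem?_take, if_pos ho, List.getElem?_drop, ruler_get (by omega)]

theorem frag_inj_aux {d α β : ℕ} (hd : 1 ≤ d) (hα : α < 2^(d-1)) (hβ : β < 2^(d-1))
    (hlt : α < β) : frag d α ≠ frag d β := by
  intro h
  have h2 := two_pow_split hd
  have h1le : 1 ≤ (2:ℕ)^(d-1) := Nat.one_le_two_pow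
  set o := 2^(d-1) - 1 - α with ho
  have hL : (frag d α)[o]? = some (v2 (2^(d-1))) := by
    rw [frag_getElem hα (by omega) (by omega)]
    congr 1
    congr 1
    omega
  have hR : (frag d β)[o]? = some (v2 (β + o + 1)) := frag_getElem hβ (by omega) (by omega)
  rw [h, hR] at hL
  have hv : v2 (β + o + 1) = d - 1 := by
    have hsome := Option.some.inj hL
    rw [hsome, v2_pow]
  have hdvd : 2^(d-1) ∣ β + o + 1 := by
    have := pow_v2_dvd (β + o + 1)
    rwa [hv] at this
  have hsub : β + o + 1 - 2^(d-1) = β - α := by omega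
  have hdvd2 : 2^(d-1) ∣ β - α := by
    have := Nat.dvd_sub hdvd (dvd_refl (2^(d-1)))
    rwa [hsub] at this
  have := Nat.le_of_dvd (by omega) hdvd2
  omega

theorem frag_inj {d α β : ℕ} (hd : 1 ≤ d) (hα : α < 2^(d-1)) (hβ : β < 2^(d-1))
    (h : frag d α = frag d β) : α = β := by
  rcases lt_trichotomy α β with hlt | he | hlt
  · exact absurd h (frag_inj_aux hd hα hβ hlt)
  · exact he
  · exact absurd h.symm (frag_inj_aux hd hβ hα hlt)

theorem tl_inj {d : ℕ} {a a' : ℕ → ℕ} (hd : 1 ≤ d)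
    (ha : ∀ j, a j < 2^(d-1)) (ha' : ∀ j, a' j < 2^(d-1)) :
    ∀ r j, tl d a r j = tl d a' r j → ∀ i < r, a (j+i) = a' (j+i) := by
  intro r
  induction r with
  | zero => intro j _ i hi; omega
  | succ r ih =>
    intro j h i hi
    have hcons := List.cons.inj h
    have happ := List.append_inj hcons.2
      (by rw [frag_length hd (ha j), frag_length hd (ha' j)])
    rcases Nat.eq_zero_or_pos i with rfl | hipos
    · exact frag_inj hd (ha j) (ha' j) happ.1
    · have := ih (j+1) happ.2 (i-1) (by omega)
      rw [show j + 1 + (i-1) = j + i from by omega] at this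
      exact this

theorem Tstr_inj {d : ℕ} {a a' : ℕ → ℕ} (hd : 1 ≤ d)
    (ha : ∀ j, a j < 2^(d-1)) (ha' : ∀ j, a' j < 2^(d-1))
    (h : Tstr d a = Tstr d a') : ∀ j < d, a j = a' j := by
  intro j hj
  have htl : tl d a d 0 = tl d a' d 0 := by
    have := h
    rw [Tstr, Tstr] at this
    exact List.append_cancel_left this
  have := tl_inj hd ha ha' d 0 htl j hj
  simpa using this

/-! ### The counting lower bound -/

theorem exists_hard (d : ℕ) (hd : 2 ≤ d)
    (harith : (d * Nat.sqrt d) *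
      ((2*d + (d * Nat.sqrt d) * (d * Nat.sqrt d)) ^ (d * Nat.sqrt d)) < (2^(d-1))^d) :
    ∃ a : ℕ → ℕ, (∀ j, a j < 2^(d-1)) ∧ d * Nat.sqrt d < grl (Tstr d a) := by
  by_contra hcon
  push_neg at hcon
  set g := d * Nat.sqrt d with hgdef
  have hgpos : 0 < g := by
    have h1 : 0 < Nat.sqrt d := Nat.sqrt_pos.mpr (by omega)
    positivity
  set σ := 2*d with hσdef
  have hσpos : 0 < σ := by omega
  have hQpos : 0 < 2^(d-1) := Nat.pow_pos (by norm_num)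
  let aOf : (Fin d → Fin (2^(d-1))) → (ℕ → ℕ) :=
    fun v j => if h : j < d then (v ⟨j, h⟩).val else 0
  have haOf : ∀ v j, aOf v j < 2^(d-1) := by
    intro v j
    by_cases h : j < d
    · simp only [aOf, dif_pos h]; exact (v ⟨j, h⟩).isLt
    · simp only [aOf, dif_neg h]; exact hQpos
  have hGv : ∀ v : Fin d → Fin (2^(d-1)),
      ∃ G : RLSLP ℕ, G.Generates (Tstr d (aOf v)) ∧ G.m ≤ g := by
    intro v
    exact grl_le_elim (Tstr_ne_nil (by omega)) (hcon (aOf v) (haOf v))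
  choose Gv hGen hGm using hGv
  let Φ : (Fin d → Fin (2^(d-1))) → Fin g × (Fin g → Fin σ ⊕ Fin g × Fin g) :=
    fun v => (⟨(Gv v).m - 1, by have := (Gv v).m_pos; have := hGm v; omega⟩,
      descOf (Gv v) g σ hσpos)
  have hrec : ∀ v, expandD g σ (Φ v).2 ((Φ v).1).val = Tstr d (aOf v) := by
    intro v
    have h1 := recover hσpos (hGm v) ((Gv v).m - 1)
      (by have := (Gv v).m_pos; omega)
      (by rw [hGen v]; exact Tstr_noSq d (aOf v))
      (by rw [hGen v]; intro x hx; exact Tstr_mem_lt hx)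
    rw [show ((Φ v).1).val = (Gv v).m - 1 from rfl, h1]
    exact hGen v
  have hinj : Function.Injective Φ := by
    intro v w hvw
    have h1 : Tstr d (aOf v) = Tstr d (aOf w) := by
      rw [← hrec v, ← hrec w, hvw]
    have h2 := Tstr_inj (by omega) (haOf v) (haOf w) h1
    funext j
    have h3 := h2 j.val j.isLt
    simp only [aOf, dif_pos j.isLt] at h3
    have : (⟨j.val, j.isLt⟩ : Fin d) = j := rfl
    rw [this] at h3
    exact Fin.ext h3
  have hcard := Fintype.card_le_of_injective Φ hinj
  simp only [Fintype.card_fun, Fintype.card_prod, Fintype.card_sum,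
    Fintype.card_fin] at hcard
  omega

/-! ### Arithmetic -/

theorem pow_gt_aux : ∀ s, 10 ≤ s → 32*(s+1) ≤ 2^s := by
  intro s hs
  induction s, hs using Nat.le_induction with
  | base => norm_num
  | succ s hs ih =>
    have h32 : 32 ≤ 2^s := by
      calc (32:ℕ) ≤ 32 * (s+1) := by omega
      _ ≤ 2^s := ih
    rw [pow_succ]
    omega

theorem log_sqrt_bound {d : ℕ} (hd : 2^20 ≤ d) : 16 * (Nat.log 2 d + 1) ≤ Nat.sqrt d := by
  have hlg : 20 ≤ Nat.log 2 d := by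
    have h1 := Nat.log_mono_right (b := 2) hd
    rwa [Nat.log_pow (by norm_num)] at h1
  set lg := Nat.log 2 d with hlgdef
  have h1 : 2^lg ≤ d := Nat.pow_log_le_self 2 (by omega)
  have h2 : 2^(lg/2) ≤ Nat.sqrt d := by
    rw [Nat.le_sqrt]
    calc 2^(lg/2) * 2^(lg/2) = 2^(lg/2 + lg/2) := by rw [pow_add]
    _ ≤ 2^lg := Nat.pow_le_pow_right (by norm_num) (by omega)
    _ ≤ d := h1
  have h3 : 32 * (lg/2 + 1) ≤ 2^(lg/2) := pow_gt_aux _ (by omega)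
  omega

theorem arith_main {d : ℕ} (hd : 2^20 ≤ d) :
    (d * Nat.sqrt d) *
      ((2*d + (d * Nat.sqrt d) * (d * Nat.sqrt d)) ^ (d * Nat.sqrt d)) < (2^(d-1))^d := by
  have hd4 : 4 ≤ d := le_trans (by norm_num) hd
  set r := Nat.sqrt d with hrdef
  set g := d * r with hgdef
  set lg := Nat.log 2 d with hlgdef
  have hr1 : 1 ≤ r := Nat.sqrt_pos.mpr (by omega)
  have hrr : r * r ≤ d := Nat.sqrt_le d
  have hrd : r ≤ d := Nat.sqrt_le_self d
  have hg1 : 1 ≤ g := by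
    have := Nat.mul_le_mul (show 1 ≤ d from by omega) hr1
    simpa using this
  have hkey : 16 * (lg + 1) ≤ r := log_sqrt_bound hd
  set X := 2*d + g*g with hXdef
  have hXd4 : X ≤ d^4 := by
    have h1 : g * g ≤ d^3 := by
      calc g * g = (d*d) * (r*r) := by ring
      _ ≤ (d*d) * d := Nat.mul_le_mul_left _ hrr
      _ = d^3 := by ring
    have e1 : d^4 = d * d^3 := by ring
    have e2 : 4 * d^3 ≤ d * d^3 := Nat.mul_le_mul_right _ hd4
    have e3 : d ≤ d^3 := Nat.le_self_pow (by norm_num) d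
    omega
  have hd2 : d < 2^(lg+1) := Nat.lt_pow_succ_log_self (by norm_num) d
  have hX2 : X ≤ 2^(4*(lg+1)) := by
    calc X ≤ d^4 := hXd4
    _ ≤ (2^(lg+1))^4 := Nat.pow_le_pow_left (by omega) 4
    _ = 2^(4*(lg+1)) := by rw [← pow_mul]; ring_nf
  have hgX : g ≤ X := by
    have := Nat.le_mul_of_pos_left g (show 0 < g from hg1)
    omega
  have hexp : 4*(lg+1) * (g+1) < (d-1)*d := by
    have h1 : 2 * (4*(lg+1)*(g+1)) ≤ 16*(lg+1) * g := by nlinarith [hg1]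
    have h2 : 16*(lg+1) * g ≤ r * g := Nat.mul_le_mul_right _ hkey
    have h3 : r * g = d * (r * r) := by rw [hgdef]; ring
    have h4 : d * (r*r) ≤ d * d := Nat.mul_le_mul_left _ hrr
    have hA : 4*d ≤ d*d := Nat.mul_le_mul_right d hd4
    have hsub : (d-1)*d = d*d - d := by rw [tsub_mul, one_mul]
    omega
  calc g * X^g ≤ X * X^g := Nat.mul_le_mul_right _ hgX
  _ = X^(g+1) := by rw [pow_succ]; ring
  _ ≤ (2^(4*(lg+1)))^(g+1) := Nat.pow_le_pow_left hX2 _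
  _ = 2^(4*(lg+1)*(g+1)) := by rw [← pow_mul]
  _ < 2^((d-1)*d) := Nat.pow_lt_pow_right (by norm_num) hexp
  _ = (2^(d-1))^d := by rw [← pow_mul]

end StmtAux

/-- There are a constant `c > 0` and an infinite family of strings, of lengths
tending to infinity, on which `z^{⌈c log n⌉} = o(ĝ_rl)`. -/
theorem stmt10 :
    ∃ c : ℝ, 0 < c ∧
      ∃ T : ℕ → List ℕ,
        Filter.Tendsto (fun m => (T m).length) Filter.atTop Filter.atTop ∧
        Filter.Tendsto
          (fun m => (zh (T m) ⌈c * Real.log ((T m).length)⌉₊ : ℝ) / (grl (T m) : ℝ))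
          Filter.atTop (nhds 0) := by
  classical
  have hex : ∀ m : ℕ, ∃ a : ℕ → ℕ, (∀ j, a j < 2^(m + 2^20 - 1)) ∧
      (m + 2^20) * Nat.sqrt (m + 2^20) < grl (StmtAux.Tstr (m + 2^20) a) := by
    intro m
    exact StmtAux.exists_hard (m + 2^20) (by norm_num)
      (StmtAux.arith_main (Nat.le_add_left _ _))
  choose A hA1 hA2 using hex
  refine ⟨2, by norm_num, fun m => StmtAux.Tstr (m + 2^20) (A m), ?_, ?_⟩
  · -- lengths tend to infinity
    apply Filter.tendsto_atTop_mono _ Filter.tendsto_id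
    intro m
    simp only [id_eq]
    show m ≤ _
    rw [StmtAux.Tstr_length (by omega) (hA1 m)]
    have h1 : m + 2^20 < 2^(m + 2^20) := Nat.lt_two_pow_self
    have h2 : 0 < (m + 2^20) * (1 + 2^(m + 2^20 - 1)) :=
      Nat.mul_pos (by omega) (by positivity)
    omega
  · -- the ratio tends to 0
    have hbound : ∀ m : ℕ,
        (zh (StmtAux.Tstr (m + 2^20) (A m))
            ⌈2 * Real.log ((StmtAux.Tstr (m + 2^20) (A m)).length)⌉₊ : ℝ) /
          (grl (StmtAux.Tstr (m + 2^20) (A m)) : ℝ)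
        ≤ 4 / (Nat.sqrt (m + 2^20) : ℝ) := by
      intro m
      set d := m + 2^20 with hd
      have hd2 : 2 ≤ d := by omega
      set T := StmtAux.Tstr d (A m) with hT
      have hlen : T.length = 2^d - 1 + d * (1 + 2^(d-1)) :=
        StmtAux.Tstr_length (by omega) (hA1 m)
      have hlenge : 2^d ≤ T.length := by
        rw [hlen]
        have h1 : 1 ≤ 2^d := Nat.one_le_two_pow
        have h2 : 0 < d * (1 + 2^(d-1)) := Nat.mul_pos (by omega) (by positivity)
        omega
      have hheight : d ≤ ⌈2 * Real.log (T.length)⌉₊ := by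
        have h1 : ((2:ℝ))^d ≤ (T.length : ℝ) := by
          exact_mod_cast hlenge
        have h0 : (0:ℝ) < (2:ℝ)^d := pow_pos (by norm_num) d
        have h2 : Real.log ((2:ℝ)^d) ≤ Real.log (T.length) :=
          Real.log_le_log h0 h1
        rw [Real.log_pow] at h2
        have hlog2 : (0.6931471803:ℝ) < Real.log 2 := Real.log_two_gt_d9
        have h4 : (1:ℝ) ≤ 2 * Real.log 2 := by linarith
        have h5 : (d:ℝ) * 1 ≤ (d:ℝ) * (2 * Real.log 2) :=
          mul_le_mul_of_nonneg_left h4 (Nat.cast_nonneg d)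
        have h6 : (d:ℝ) * (2 * Real.log 2) = 2 * ((d:ℝ) * Real.log 2) := by ring
        have h3 : (d:ℝ) ≤ 2 * Real.log (T.length) := by linarith
        calc d = ⌈(d:ℝ)⌉₊ := (Nat.ceil_natCast d).symm
        _ ≤ ⌈2 * Real.log (T.length)⌉₊ := Nat.ceil_mono h3
      have hzh : zh T ⌈2 * Real.log (T.length)⌉₊ ≤ 4*d - 1 :=
        StmtAux.zh_Tstr_le hd2 (hA1 m) hheight
      have hgrl : d * Nat.sqrt d < grl T := hA2 m
      have hr1 : 1 ≤ Nat.sqrt d := Nat.sqrt_pos.mpr (by omega)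
      have hdr0 : 0 < d * Nat.sqrt d := Nat.mul_pos (by omega) (by omega)
      have hdr : (0:ℝ) < ((d * Nat.sqrt d : ℕ) : ℝ) := by exact_mod_cast hdr0
      have hzh' : zh T ⌈2 * Real.log (T.length)⌉₊ ≤ 4*d := le_trans hzh (by omega)
      have hstep : (zh T ⌈2 * Real.log (T.length)⌉₊ : ℝ) / (grl T : ℝ)
          ≤ ((4*d : ℕ) : ℝ) / ((d * Nat.sqrt d : ℕ) : ℝ) := by
        apply div_le_div₀ (Nat.cast_nonneg _) _ hdr _
        · exact_mod_cast hzh'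
        · exact_mod_cast le_of_lt hgrl
      refine le_trans hstep (le_of_eq ?_)
      have heq : ((4*d:ℕ):ℝ) / ((d * Nat.sqrt d : ℕ):ℝ) = 4 / (Nat.sqrt d : ℝ) := by
        push_cast
        rw [mul_comm (4:ℝ) (d:ℝ)]
        exact mul_div_mul_left _ _ (Nat.cast_ne_zero.mpr (by omega))
      exact heq
    have hupper : Filter.Tendsto (fun m : ℕ => 4 / (Nat.sqrt (m + 2^20) : ℝ))
        Filter.atTop (nhds 0) := by
      have hs : Filter.Tendsto (fun m : ℕ => (Nat.sqrt (m + 2^20) : ℝ))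
          Filter.atTop Filter.atTop := by
        apply Filter.Tendsto.comp tendsto_natCast_atTop_atTop
        apply Filter.tendsto_atTop_atTop.mpr
        intro N
        refine ⟨N*N, fun m hm => ?_⟩
        have h1 : N*N ≤ m + 2^20 := le_trans hm (Nat.le_add_right _ _)
        have h2 := Nat.sqrt_le_sqrt h1
        rwa [Nat.sqrt_eq] at h2
      exact Filter.Tendsto.div_atTop tendsto_const_nhds hs
    apply tendsto_of_tendsto_of_tendsto_of_le_of_le
      (tendsto_const_nhds : Filter.Tendsto (fun _ : ℕ => (0:ℝ)) Filter.atTop (nhds 0))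
      hupper
    · intro m
      exact div_nonneg (Nat.cast_nonneg _) (Nat.cast_nonneg _)
    · exact hbound
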